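/- For every infinite binary sequence x and every k ∈ ℕ there exists n ∈ ℕ such that C(x[n]) < n - k, where x[n] denotes the first n bits of x. In particular, no infinite binary sequence has all but finitely many of its initial segments incompressible with respect to plain complexity. -/

import Mathlib

open MeasureTheory
open scoped ENNReal

/-- The length-`n` initial segment of an infinite binary sequence. -/
def pref (x : ℕ → Bool) (n : ℕ) : List Bool := List.ofFn (fun i : Fin n => x i)

/-- A set of binary strings is prefix-free if no member is a proper prefix of another. -/
def PFree (S : Set (List Bool)) : Prop := ∀ a ∈ S, ∀ b ∈ S, a <+: b → a = b

/-- Kolmogorov complexity of `b` relative to machine `M`: the least length of an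
input mapped by `M` to `b`, `∞` if there is none. -/
noncomputable def Cpx (M : List Bool →. List Bool) (b : List Bool) : ℕ∞ :=
  sInf {n : ℕ∞ | ∃ p : List Bool, b ∈ M p ∧ (p.length : ℕ∞) = n}

/-- A universal machine for plain complexity. -/
def Universal (U : List Bool →. List Bool) : Prop :=
  Partrec U ∧ ∀ L : List Bool →. List Bool, Partrec L →
    ∃ k : ℕ, ∀ b : List Bool, Cpx U b ≤ Cpx L b + (k : ℕ∞)

/-- A prefix-free universal machine: prefix-free domain, universal among machines
with prefix-free domain. -/
def PFUniversal (V : List Bool →. List Bool) : Prop :=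
  Partrec V ∧ PFree {p | (V p).Dom} ∧
    ∀ L : List Bool →. List Bool, Partrec L → PFree {p | (L p).Dom} →
      ∃ k : ℕ, ∀ b : List Bool, Cpx V b ≤ Cpx L b + (k : ℕ∞)

/-- `cyl S` is the set of infinite binary sequences extending some member of `S`. -/
def cyl (S : Set (List Bool)) : Set (ℕ → Bool) := {x | ∃ b ∈ S, pref x b.length = b}

/-- The `e`-th computably enumerable set of binary strings. -/
def W (e : ℕ) : Set (List Bool) :=
  {b | ((Denumerable.ofNat Nat.Partrec.Code e).eval (Encodable.encode b)).Dom}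

/-- The binary-digit expansion of a real number. -/
noncomputable def binSeq (r : ℝ) : ℕ → Bool := fun n => decide (⌊r * 2 ^ (n + 1)⌋ % 2 = 1)

/-- The fair-coin (uniform product) measure on Cantor space, as the pushforward of
Lebesgue measure on `(0,1]` under binary expansion. -/
noncomputable def coin : Measure (ℕ → Bool) :=
  Measure.map binSeq (volume.restrict (Set.Ioc (0 : ℝ) 1))

/-- Martin-Löf test in sense 2. -/
def MLTest (f : ℕ → ℕ) : Prop :=
  Computable f ∧ ∀ n : ℕ, coin (cyl (W (f n))) ≤ (2 : ℝ≥0∞)⁻¹ ^ n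

/-- `x` fails the sense-2 test `f`. -/
def Fails (x : ℕ → Bool) (f : ℕ → ℕ) : Prop := ∀ n : ℕ, x ∈ cyl (W (f n))

/-- Martin-Löf randomness (sense 2). -/
def MLRandom (x : ℕ → Bool) : Prop := ∀ f : ℕ → ℕ, MLTest f → ¬ Fails x f

/-- The dyadic rational value of a finite binary string. -/
noncomputable def sval (b : List Bool) : ℝ :=
  ∑ i : Fin b.length, if b.get i then ((2 : ℝ))⁻¹ ^ (i.val + 1) else 0

/-- Chaitin's halting probability of machine `V`. -/
noncomputable def Omega (V : List Bool →. List Bool) : ℝ :=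
  ∑' p : {p : List Bool // (V p).Dom}, ((2 : ℝ))⁻¹ ^ (p.val.length)

/-- Martin-Löf test in sense 1. -/
def MLTest1 (t : List Bool →. ℕ) : Prop :=
  Partrec t ∧ ∀ m : ℕ, coin (cyl {b | ∃ v ∈ t b, m ≤ v}) ≤ (2 : ℝ≥0∞)⁻¹ ^ m

/-- `x` passes the sense-1 test `t`: the values of `t` on `x`'s prefixes are bounded. -/
def Passes1 (x : ℕ → Bool) (t : List Bool →. ℕ) : Prop :=
  ∃ B : ℕ, ∀ (n : ℕ) (v : ℕ), v ∈ t (pref x n) → v ≤ B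

/-- A set of binary strings is computably enumerable. -/
def CE (S : Set (List Bool)) : Prop :=
  ∃ f : List Bool →. ℕ, Partrec f ∧ S = {b | (f b).Dom}

/-- Every infinite binary sequence has initial segments of arbitrarily large
compressibility: for all `x` and `k` there is `n` with `C(x[n]) < n - k`.
Hence no real is incompressible almost always. -/
theorem stmt5 (U : List Bool →. List Bool) (hU : Universal U)
    (x : ℕ → Bool) (k : ℕ) :
    ∃ n : ℕ, Cpx U (pref x n) + (k : ℕ∞) < (n : ℕ∞) := by
  classical
  -- The machine L p := B(|p|) ++ p, where B is the Denumerable enumeration.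
  set B : ℕ → List Bool :=
    fun n => (Denumerable.ofNat (List ℕ) n).map (fun i => decide (i % 2 = 1)) with hB
  have hBp : Primrec B :=
    (Primrec.list_map (Primrec.ofNat (List ℕ))
      ((Primrec.eq.comp
        ((Primrec.nat_mod).comp Primrec.snd (Primrec.const 2))
        (Primrec.const 1)).decide.to₂)).comp Primrec.id
  set f : List Bool → List Bool := fun p => B p.length ++ p with hf
  have hfp : Primrec f :=
    Primrec.list_append.comp (hBp.comp Primrec.list_length) Primrec.id
  have hL : Partrec (fun p => Part.some (f p) : List Bool →. List Bool) :=
    hfp.to_comp.partrec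
  obtain ⟨c, hc⟩ := hU.2 _ hL
  set m := k + c + 1 with hm
  set w := pref x m with hw
  set N := Encodable.encode (w.map (fun b => if b then (1:ℕ) else 0)) with hN
  have hBN : B N = w := by
    rw [hB]
    simp only [hN, Denumerable.ofNat_encode, List.map_map]
    have h : ((fun i : ℕ => decide (i % 2 = 1)) ∘ fun b : Bool => if b then (1:ℕ) else 0) = id := by
      funext b; cases b <;> simp
    rw [h, List.map_id]
  refine ⟨m + N, ?_⟩
  set q : List Bool := List.ofFn (fun i : Fin N => x (m + i)) with hq
  have hqlen : q.length = N := List.length_ofFn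
  have hsplit : pref x (m + N) = w ++ q := by
    simp only [pref, hw, hq, List.ofFn_add]
    congr 1
  have hmem : pref x (m + N) ∈ (fun p => Part.some (f p) : List Bool →. List Bool) q := by
    simp only [Part.mem_some_iff, hf, hqlen, hsplit, hBN]
  have h1 : Cpx (fun p => Part.some (f p)) (pref x (m + N)) ≤ (N : ℕ∞) :=
    sInf_le ⟨q, hmem, by rw [hqlen]⟩
  have h2 : Cpx U (pref x (m + N)) ≤ (N : ℕ∞) + c :=
    (hc _).trans (add_le_add_left h1 _)
  calc Cpx U (pref x (m + N)) + (k : ℕ∞) ≤ (N : ℕ∞) + c + k := add_le_add_left h2 _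
    _ < ((m + N : ℕ) : ℕ∞) := by
        push_cast
        rw [show ((N : ℕ∞) + c + k = ((N + c + k : ℕ) : ℕ∞)) by push_cast; ring]
        exact_mod_cast by omega
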